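/- Let k be a symmetric positive-semidefinite kernel on a type ι with k z z ≤ 1 for all z, and let σ > 0 be a noise level. For any n, any observation points x : Fin n → ι, any new observation point w : ι, and any z : ι, the decrease of the Gaussian-process posterior variance at z caused by adding the observation point w satisfies σ²(z; x) − σ²(z; x⁺) ≤ σ²(w; x) / σ², where x⁺ = Fin.snoc x w is x with w appended. -/

import Mathlib

set_option maxHeartbeats 2000000


open Matrix

/-- The Gaussian-process posterior covariance `k(z, z'; x)` given observation
points `x : Fin n → ι` and noise level `σ`:
`k z z' − k_x(z)ᵀ (K_x + σ² I)⁻¹ k_x(z')`. -/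
noncomputable def postCov {ι : Type*} (k : ι → ι → ℝ) (σ : ℝ) {n : ℕ}
    (x : Fin n → ι) (z z' : ι) : ℝ :=
  k z z' -
    dotProduct (fun i => k (x i) z)
      (Matrix.mulVec
        ((Matrix.of (fun i j => k (x i) (x j)) + σ ^ 2 • (1 : Matrix (Fin n) (Fin n) ℝ))⁻¹)
        (fun i => k (x i) z'))

/-- The Gaussian-process posterior variance `σ²(z; x) = k(z, z; x)`. -/
noncomputable def postVar {ι : Type*} (k : ι → ι → ℝ) (σ : ℝ) {n : ℕ}
    (x : Fin n → ι) (z : ι) : ℝ :=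
  postCov k σ x z z

section Helpers

lemma GPaux.smul_one_posDef {m : Type*} [Fintype m] [DecidableEq m] {c : ℝ} (hc : 0 < c) :
    (c • (1 : Matrix m m ℝ)).PosDef := by
  have : c • (1 : Matrix m m ℝ) = Matrix.diagonal (fun _ => c) := by
    ext i j
    by_cases h : i = j <;> simp [h, Matrix.one_apply, Matrix.diagonal_apply]
  rw [this]
  exact Matrix.posDef_diagonal_iff.mpr (fun _ => hc)

lemma GPaux.dot_symm {m : Type*} [Fintype m] (B : Matrix m m ℝ) (hB : Bᵀ = B) (v w : m → ℝ) :
    v ⬝ᵥ B *ᵥ w = w ⬝ᵥ B *ᵥ v := by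
  conv_lhs => rw [dotProduct_mulVec, ← hB, vecMul_transpose, dotProduct_comm]

lemma GPaux.dotProduct_snoc {n : ℕ} (f g : Fin (n + 1) → ℝ) :
    f ⬝ᵥ g = (fun i => f (Fin.castSucc i)) ⬝ᵥ (fun i => g (Fin.castSucc i))
      + f (Fin.last n) * g (Fin.last n) := by
  simpa [dotProduct] using Fin.sum_univ_castSucc (fun i => f i * g i)

lemma GPaux.dot_snoc_right {n : ℕ} (f : Fin (n + 1) → ℝ) (h : Fin n → ℝ) (a : ℝ) :
    f ⬝ᵥ (Fin.snoc h a : Fin (n + 1) → ℝ)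
      = (fun i => f (Fin.castSucc i)) ⬝ᵥ h + f (Fin.last n) * a := by
  rw [GPaux.dotProduct_snoc]
  simp

lemma GPaux.dot_snoc_left {n : ℕ} (h : Fin n → ℝ) (a : ℝ) (f : Fin (n + 1) → ℝ) :
    (Fin.snoc h a : Fin (n + 1) → ℝ) ⬝ᵥ f
      = h ⬝ᵥ (fun i => f (Fin.castSucc i)) + a * f (Fin.last n) := by
  rw [GPaux.dotProduct_snoc]
  simp

lemma GPaux.quad_split {ι : Type*} (k : ι → ι → ℝ) {m : ℕ} (y : Fin (m + 1) → ι)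
    (g : Fin (m + 1) → ℝ) :
    g ⬝ᵥ (Matrix.of (fun i j => k (y i) (y j)) : Matrix (Fin (m + 1)) (Fin (m + 1)) ℝ) *ᵥ g
    = (fun i => g (Fin.castSucc i)) ⬝ᵥ
          (Matrix.of (fun i j => k (y (Fin.castSucc i)) (y (Fin.castSucc j))) :
            Matrix (Fin m) (Fin m) ℝ) *ᵥ (fun i => g (Fin.castSucc i))
      + g (Fin.last m) *
          ((fun i => k (y (Fin.last m)) (y (Fin.castSucc i))) ⬝ᵥ (fun i => g (Fin.castSucc i)))
      + ((fun i => g (Fin.castSucc i)) ⬝ᵥ (fun i => k (y (Fin.castSucc i)) (y (Fin.last m))))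
          * g (Fin.last m)
      + g (Fin.last m) * k (y (Fin.last m)) (y (Fin.last m)) * g (Fin.last m) := by
  simp only [dotProduct, mulVec, Matrix.of_apply, Fin.sum_univ_castSucc,
    Finset.sum_mul, Finset.mul_sum, Finset.sum_add_distrib, mul_add, add_mul]
  ring

lemma GPaux.mulVec_row_castSucc {m : ℕ} (M : Matrix (Fin (m + 1)) (Fin (m + 1)) ℝ)
    (q : Fin (m + 1) → ℝ) (i : Fin m) :
    (M *ᵥ q) (Fin.castSucc i)
      = (fun j => M (Fin.castSucc i) (Fin.castSucc j)) ⬝ᵥ (fun j => q (Fin.castSucc j))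
        + M (Fin.castSucc i) (Fin.last m) * q (Fin.last m) := by
  simp [Matrix.mulVec, dotProduct, Fin.sum_univ_castSucc]

lemma GPaux.mulVec_row_last {m : ℕ} (M : Matrix (Fin (m + 1)) (Fin (m + 1)) ℝ)
    (q : Fin (m + 1) → ℝ) :
    (M *ᵥ q) (Fin.last m)
      = (fun j => M (Fin.last m) (Fin.castSucc j)) ⬝ᵥ (fun j => q (Fin.castSucc j))
        + M (Fin.last m) (Fin.last m) * q (Fin.last m) := by
  simp [Matrix.mulVec, dotProduct, Fin.sum_univ_castSucc]

lemma GPaux.quad_split2 {ι : Type*} (k : ι → ι → ℝ) {m : ℕ} (y : Fin (m + 2) → ι)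
    (h : Fin m → ℝ) (a c : ℝ) :
    (Fin.snoc (Fin.snoc h a) c : Fin (m + 2) → ℝ) ⬝ᵥ
        (Matrix.of (fun i j => k (y i) (y j)) :
          Matrix (Fin (m + 2)) (Fin (m + 2)) ℝ) *ᵥ (Fin.snoc (Fin.snoc h a) c : Fin (m + 2) → ℝ)
    = h ⬝ᵥ (Matrix.of (fun i j => k (y (Fin.castSucc (Fin.castSucc i)))
            (y (Fin.castSucc (Fin.castSucc j)))) : Matrix (Fin m) (Fin m) ℝ) *ᵥ h
      + a * ((fun i => k (y (Fin.castSucc (Fin.last m))) (y (Fin.castSucc (Fin.castSucc i)))) ⬝ᵥ h)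
      + (h ⬝ᵥ (fun i => k (y (Fin.castSucc (Fin.castSucc i))) (y (Fin.castSucc (Fin.last m))))) * a
      + a * k (y (Fin.castSucc (Fin.last m))) (y (Fin.castSucc (Fin.last m))) * a
      + c * ((fun i => k (y (Fin.last (m + 1))) (y (Fin.castSucc (Fin.castSucc i)))) ⬝ᵥ h)
      + c * (k (y (Fin.last (m + 1))) (y (Fin.castSucc (Fin.last m))) * a)
      + (h ⬝ᵥ (fun i => k (y (Fin.castSucc (Fin.castSucc i))) (y (Fin.last (m + 1))))) * c
      + a * k (y (Fin.castSucc (Fin.last m))) (y (Fin.last (m + 1))) * c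
      + c * k (y (Fin.last (m + 1))) (y (Fin.last (m + 1))) * c := by
  rw [GPaux.quad_split]
  have h2 := GPaux.quad_split k (fun i => y (Fin.castSucc i)) (Fin.snoc h a : Fin (m + 1) → ℝ)
  simp only [Fin.snoc_castSucc, Fin.snoc_last] at h2 ⊢
  rw [h2]
  simp only [GPaux.dot_snoc_right, GPaux.dot_snoc_left, Fin.snoc_castSucc, Fin.snoc_last]
  ring

end Helpers
theorem posterior_variance_decrement_le
    {ι : Type*} (k : ι → ι → ℝ) (σ : ℝ)
    (hσ : 0 < σ)
    (hsymm : ∀ z z', k z z' = k z' z)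
    (hpsd : ∀ (n : ℕ) (x : Fin n → ι),
      (Matrix.of (fun i j => k (x i) (x j)) : Matrix (Fin n) (Fin n) ℝ).PosSemidef)
    (hbound : ∀ z, k z z ≤ 1)
    (n : ℕ) (x : Fin n → ι) (w : ι) (z : ι) :
    postVar k σ x z - postVar k σ (Fin.snoc x w) z ≤ postVar k σ x w / σ ^ 2 := by
  have hσ2 : (0:ℝ) < σ ^ 2 := by positivity
  simp only [postVar, postCov]
  set u : Fin n → ℝ := fun i => k (x i) z with hu_def
  set b : Fin n → ℝ := fun i => k (x i) w with hb_def
  set v : Fin (n + 1) → ℝ := fun (i : Fin (n + 1)) => k ((Fin.snoc x w : Fin (n + 1) → ι) i) z with hv_def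
  set A : Matrix (Fin n) (Fin n) ℝ :=
    Matrix.of (fun i j => k (x i) (x j)) + σ ^ 2 • (1 : Matrix (Fin n) (Fin n) ℝ) with hA_def
  set M : Matrix (Fin (n + 1)) (Fin (n + 1)) ℝ :=
    Matrix.of (fun (i j : Fin (n + 1)) => k ((Fin.snoc x w : Fin (n + 1) → ι) i) ((Fin.snoc x w : Fin (n + 1) → ι) j))
      + σ ^ 2 • (1 : Matrix (Fin (n + 1)) (Fin (n + 1)) ℝ) with hM_def
  have hA : A.PosDef := by
    rw [hA_def]
    exact Matrix.PosDef.posSemidef_add (hpsd n x) (GPaux.smul_one_posDef hσ2)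
  have hM : M.PosDef := by
    rw [hM_def]
    exact Matrix.PosDef.posSemidef_add (hpsd (n + 1) (Fin.snoc x w)) (GPaux.smul_one_posDef hσ2)
  have hAd : IsUnit A.det := A.isUnit_iff_isUnit_det.mp hA.isUnit
  have hMd : IsUnit M.det := M.isUnit_iff_isUnit_det.mp hM.isUnit
  have hAA : A * A⁻¹ = 1 := Matrix.mul_nonsing_inv A hAd
  have hAA' : A⁻¹ * A = 1 := Matrix.nonsing_inv_mul A hAd
  have hMM : M * M⁻¹ = 1 := Matrix.mul_nonsing_inv M hMd
  have hAsymm : Aᵀ = A := by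
    rw [hA_def, Matrix.transpose_add, Matrix.transpose_smul, Matrix.transpose_one]
    congr 1
    ext i j
    simp only [Matrix.transpose_apply, Matrix.of_apply]
    exact hsymm (x j) (x i)
  have hAinvsymm : A⁻¹ᵀ = A⁻¹ := by rw [Matrix.transpose_nonsing_inv, hAsymm]
  set γ : ℝ := b ⬝ᵥ A⁻¹ *ᵥ u with hγ_def
  set δ : ℝ := b ⬝ᵥ A⁻¹ *ᵥ b with hδ_def
  set η : ℝ := u ⬝ᵥ A⁻¹ *ᵥ u with hη_def
  have hγswap : u ⬝ᵥ A⁻¹ *ᵥ b = γ := by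
    rw [hγ_def]; exact GPaux.dot_symm _ hAinvsymm u b
  set q : Fin (n + 1) → ℝ := M⁻¹ *ᵥ v with hq_def
  set p : Fin n → ℝ := fun i => q (Fin.castSucc i) with hp_def
  set t : ℝ := q (Fin.last n) with ht_def
  have hMcc : ∀ i j : Fin n, M (Fin.castSucc i) (Fin.castSucc j) = A i j := by
    intro i j
    rw [hM_def, hA_def]
    simp [Matrix.one_apply, Fin.castSucc_inj]
  have hMcl : ∀ i : Fin n, M (Fin.castSucc i) (Fin.last n) = b i := by
    intro i
    rw [hM_def, hb_def]
    simp [Matrix.one_apply, (Fin.castSucc_lt_last i).ne]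
  have hMlc : ∀ j : Fin n, M (Fin.last n) (Fin.castSucc j) = b j := by
    intro j
    rw [hM_def, hb_def]
    simp [Matrix.one_apply, (Fin.castSucc_lt_last j).ne', hsymm w (x j)]
  have hMll : M (Fin.last n) (Fin.last n) = k w w + σ ^ 2 := by
    rw [hM_def]; simp [Matrix.one_apply]
  have hMq : M *ᵥ q = v := by
    rw [hq_def, Matrix.mulVec_mulVec, hMM, Matrix.one_mulVec]
  have hrow : A *ᵥ p = u - t • b := by
    funext i
    have h1 := congrFun hMq (Fin.castSucc i)
    rw [GPaux.mulVec_row_castSucc] at h1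
    simp only [hMcc, hMcl, ← hp_def, ← ht_def] at h1
    have h2 : v (Fin.castSucc i) = u i := by rw [hv_def, hu_def]; simp
    rw [h2] at h1
    have h3 : (fun j => A i j) ⬝ᵥ p = (A *ᵥ p) i := rfl
    rw [h3] at h1
    simp only [Pi.sub_apply, Pi.smul_apply, smul_eq_mul]
    linarith
  have hlast : b ⬝ᵥ p + (k w w + σ ^ 2) * t = k w z := by
    have h1 := congrFun hMq (Fin.last n)
    rw [GPaux.mulVec_row_last] at h1
    simp only [hMlc, hMll, ← hp_def, ← ht_def] at h1
    have h2 : v (Fin.last n) = k w z := by rw [hv_def]; simp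
    rw [h2] at h1
    have h3 : (fun j => b j) ⬝ᵥ p = b ⬝ᵥ p := rfl
    rw [h3] at h1
    exact h1
  have hp2 : p = A⁻¹ *ᵥ u - t • (A⁻¹ *ᵥ b) := by
    have h1 : A⁻¹ *ᵥ (A *ᵥ p) = p := by
      rw [Matrix.mulVec_mulVec, hAA', Matrix.one_mulVec]
    rw [← h1, hrow, Matrix.mulVec_sub, Matrix.mulVec_smul]
  have hup : u ⬝ᵥ p = η - t * γ := by
    rw [hp2, dotProduct_sub, dotProduct_smul, smul_eq_mul, hγswap, ← hη_def]
  have hbp : b ⬝ᵥ p = γ - t * δ := by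
    rw [hp2, dotProduct_sub, dotProduct_smul, smul_eq_mul, ← hγ_def, ← hδ_def]
  have hts : t * ((k w w - δ) + σ ^ 2) = k w z - γ := by
    rw [hbp] at hlast
    linear_combination hlast
  have hvq : v ⬝ᵥ q = η + t * (k w z - γ) := by
    rw [GPaux.dotProduct_snoc v q]
    have e1 : (fun i => v (Fin.castSucc i)) = u := by
      funext i; rw [hv_def, hu_def]; simp
    have e2 : v (Fin.last n) = k w z := by rw [hv_def]; simp
    rw [e1, e2, ← hp_def, ← ht_def, hup]
    ring
  -- the posterior kernel is positive semidefinite (quadratic form version)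
  have hQ : ∀ a c : ℝ,
      0 ≤ a ^ 2 * (k w w - δ) + 2 * a * c * (k w z - γ) + c ^ 2 * (k z z - η) := by
    intro a c
    set f : Fin n → ℝ := a • b + c • u with hf_def
    set h0 : Fin n → ℝ := A⁻¹ *ᵥ f with hh_def
    have hg := (hpsd (n + 2) (Fin.snoc (Fin.snoc x w) z)).dotProduct_mulVec_nonneg (Fin.snoc (Fin.snoc (-h0) a) c)
    rw [star_trivial] at hg
    rw [GPaux.quad_split2 k (Fin.snoc (Fin.snoc x w) z) (-h0) a c] at hg
    simp only [Fin.snoc_castSucc, Fin.snoc_last] at hg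
    have ewb : (fun i => k w (x i)) = b := by
      funext i; rw [hb_def]; exact hsymm w (x i)
    have ezu : (fun i => k z (x i)) = u := by
      funext i; rw [hu_def]; exact hsymm z (x i)
    have exw : (fun i => k (x i) w) = b := by funext i; rw [hb_def]
    have exz : (fun i => k (x i) z) = u := by funext i; rw [hu_def]
    have ebh : b ⬝ᵥ h0 = a * δ + c * γ := by
      rw [hh_def, hf_def, Matrix.mulVec_add, Matrix.mulVec_smul, Matrix.mulVec_smul,
        dotProduct_add, dotProduct_smul, dotProduct_smul, smul_eq_mul, smul_eq_mul,
        ← hδ_def, ← hγ_def]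
    have euh : u ⬝ᵥ h0 = a * γ + c * η := by
      rw [hh_def, hf_def, Matrix.mulVec_add, Matrix.mulVec_smul, Matrix.mulVec_smul,
        dotProduct_add, dotProduct_smul, dotProduct_smul, smul_eq_mul, smul_eq_mul,
        hγswap, ← hη_def]
    have ehb : h0 ⬝ᵥ b = a * δ + c * γ := by rw [dotProduct_comm, ebh]
    have ehu : h0 ⬝ᵥ u = a * γ + c * η := by rw [dotProduct_comm, euh]
    have eh0f : h0 ⬝ᵥ f = a * (a * δ + c * γ) + c * (a * γ + c * η) := by
      rw [dotProduct_comm, hf_def, add_dotProduct, smul_dotProduct, smul_dotProduct,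
        smul_eq_mul, smul_eq_mul, ebh, euh]
    have hnn : 0 ≤ h0 ⬝ᵥ h0 := by
      simp only [dotProduct]
      exact Finset.sum_nonneg fun i _ => mul_self_nonneg _
    have e_quad : h0 ⬝ᵥ (Matrix.of (fun i j => k (x i) (x j)) : Matrix (Fin n) (Fin n) ℝ) *ᵥ h0
        = h0 ⬝ᵥ f - σ ^ 2 * (h0 ⬝ᵥ h0) := by
      have hK0 : (Matrix.of (fun i j => k (x i) (x j)) : Matrix (Fin n) (Fin n) ℝ)
          = A - σ ^ 2 • 1 := by rw [hA_def, add_sub_cancel_right]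
      have hAh : A *ᵥ h0 = f := by
        rw [hh_def, Matrix.mulVec_mulVec, hAA, Matrix.one_mulVec]
      rw [hK0, Matrix.sub_mulVec, dotProduct_sub, hAh, Matrix.smul_mulVec,
        Matrix.one_mulVec, dotProduct_smul, smul_eq_mul]
    simp only [ewb, ezu, exw, exz, Matrix.mulVec_neg, dotProduct_neg, neg_dotProduct,
      neg_neg, e_quad, eh0f, ebh, ehb, euh, ehu, hsymm z w] at hg
    have hσh : 0 ≤ σ ^ 2 * (h0 ⬝ᵥ h0) := mul_nonneg hσ2.le hnn
    nlinarith [hg, hσh]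
  have hη0 : 0 ≤ η := by
    have h1 := hA.inv.posSemidef.dotProduct_mulVec_nonneg u
    rw [star_trivial] at h1
    rw [hη_def]; exact h1
  have hVw0 : 0 ≤ k w w - δ := by have := hQ 1 0; simpa using this
  have hVz1 : k z z - η ≤ 1 := by have := hbound z; linarith
  have hCS : (k w z - γ) ^ 2 ≤ (k w w - δ) * (k z z - η) := by
    have hd := discrim_le_zero (a := k w w - δ) (b := 2 * (k w z - γ)) (c := k z z - η) ?_
    · rw [discrim] at hd; nlinarith [hd]
    · intro r
      have h := hQ r 1
      ring_nf at h ⊢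
      linarith
  have hspos : (0:ℝ) < (k w w - δ) + σ ^ 2 := by linarith
  have ht_eq : t = (k w z - γ) / ((k w w - δ) + σ ^ 2) := by
    rw [eq_div_iff hspos.ne']; exact hts
  have hdec : v ⬝ᵥ q - η = (k w z - γ) ^ 2 / ((k w w - δ) + σ ^ 2) := by
    rw [hvq, ht_eq]
    field_simp
    ring
  have h1 : (k w z - γ) ^ 2 ≤ (k w w - δ) := by
    have h2 : (k w w - δ) * (k z z - η) ≤ (k w w - δ) * 1 :=
      mul_le_mul_of_nonneg_left hVz1 hVw0
    linarith
  have hfin : (k w z - γ) ^ 2 / ((k w w - δ) + σ ^ 2) ≤ (k w w - δ) / σ ^ 2 := by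
    calc (k w z - γ) ^ 2 / ((k w w - δ) + σ ^ 2)
        ≤ (k w w - δ) / ((k w w - δ) + σ ^ 2) := by gcongr
      _ ≤ (k w w - δ) / σ ^ 2 := by
          apply div_le_div_of_nonneg_left hVw0 hσ2
          linarith
  linarith [hdec, hfin]
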